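/- Let H be a complex Hilbert space and B : H → H a bounded linear operator satisfying B∘B* + B*∘B = id. Then there exists a unitary operator U on H such that B = U ∘ |B|, where |B| denotes the positive square root of B*∘B. -/

import Mathlib

set_option maxHeartbeats 1000000

open ContinuousLinearMap

open scoped InnerProductSpace

theorem polar_decomposition_unitary {H : Type*} [NormedAddCommGroup H]
    [InnerProductSpace ℂ H] [CompleteSpace H] (B : H →L[ℂ] H)
    (hB : B ∘L ContinuousLinearMap.adjoint B + ContinuousLinearMap.adjoint B ∘L B = 1) :
    ∃ U P : H →L[ℂ] H,
      ContinuousLinearMap.adjoint U ∘L U = 1 ∧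
      U ∘L ContinuousLinearMap.adjoint U = 1 ∧
      P.IsPositive ∧
      P ∘L P = ContinuousLinearMap.adjoint B ∘L B ∧
      B = U ∘L P := by
  classical
  -- basic positivity facts
  have hTpos : (adjoint B ∘L B).IsPositive := by
    simpa [one_def, id_comp] using (isPositive_one (E := H) (𝕜 := ℂ)).adjoint_conj B
  have hTnn : (0 : H →L[ℂ] H) ≤ adjoint B ∘L B := (nonneg_iff_isPositive _).mpr hTpos
  obtain ⟨P, hPpos, hPP⟩ : ∃ P : H →L[ℂ] H, P.IsPositive ∧ P ∘L P = adjoint B ∘L B := by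
    refine ⟨CFC.sqrt (adjoint B ∘L B), (nonneg_iff_isPositive _).mp (CFC.sqrt_nonneg _), ?_⟩
    rw [← mul_def]
    exact CFC.sqrt_mul_sqrt_self _ hTnn
  have hPsa : adjoint P = P := hPpos.isSelfAdjoint.adjoint_eq
  -- helper: equality of inner products gives equality of norms
  have normsq : ∀ a b : H, ⟪a, a⟫_ℂ = ⟪b, b⟫_ℂ → ‖a‖ = ‖b‖ := by
    intro a b h
    rw [inner_self_eq_norm_sq_to_K, inner_self_eq_norm_sq_to_K] at h
    have h2 : ‖a‖ ^ 2 = ‖b‖ ^ 2 := by exact_mod_cast h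
    have h3 := congrArg Real.sqrt h2
    rwa [Real.sqrt_sq (norm_nonneg _), Real.sqrt_sq (norm_nonneg _)] at h3
  have hBactsq : ∀ x : H, ⟪P x, P x⟫_ℂ = ⟪B x, B x⟫_ℂ := by
    intro x
    calc ⟪P x, P x⟫_ℂ = ⟪adjoint P x, P x⟫_ℂ := by rw [hPsa]
      _ = ⟪x, P (P x)⟫_ℂ := adjoint_inner_left P (P x) x
      _ = ⟪x, (P ∘L P) x⟫_ℂ := rfl
      _ = ⟪x, (adjoint B ∘L B) x⟫_ℂ := by rw [hPP]
      _ = ⟪x, adjoint B (B x)⟫_ℂ := rfl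
      _ = ⟪B x, B x⟫_ℂ := adjoint_inner_right B x (B x)
  have hnPB : ∀ x : H, ‖P x‖ = ‖B x‖ := fun x => normsq _ _ (hBactsq x)
  have hkerPB : ∀ v : H, B v = 0 → P v = 0 := by
    intro v hv
    have : ‖P v‖ = 0 := by rw [hnPB v, hv, norm_zero]
    exact norm_eq_zero.mp this
  -- pointwise form of the hypothesis
  have hBpt : ∀ v : H, B (adjoint B v) + adjoint B (B v) = v := by
    intro v
    have := DFunLike.congr_fun hB v
    simpa using this
  have hBBk : ∀ z : H, B z = 0 → B (adjoint B z) = z := by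
    intro z hz
    have := hBpt z
    rwa [hz, map_zero, add_zero] at this
  have hadjadj : ∀ z : H, B z = 0 → adjoint B (adjoint B z) = 0 := by
    intro z hz
    have hBw : B (adjoint B z) = z := hBBk z hz
    have h1 : B (adjoint B (adjoint B z)) = 0 := by
      have h2 := hBpt (adjoint B z)
      rw [hBw] at h2
      exact add_eq_right.mp h2
    have : ⟪adjoint B (adjoint B z), adjoint B (adjoint B z)⟫_ℂ = 0 := by
      rw [adjoint_inner_left B (adjoint B (adjoint B z)) (adjoint B z), h1,
        inner_zero_right]
    exact inner_self_eq_zero.mp this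
  have hnadj : ∀ z : H, B z = 0 → ‖adjoint B z‖ = ‖z‖ := by
    intro z hz
    refine normsq _ _ ?_
    rw [adjoint_inner_left B (adjoint B z) z, hBBk z hz]
  have horth1 : ∀ x z : H, B z = 0 → ⟪B x, adjoint B z⟫_ℂ = 0 := by
    intro x z hz
    rw [← adjoint_inner_right B x (adjoint B z), hadjadj z hz, inner_zero_right]
  have horth2 : ∀ x z : H, B z = 0 → ⟪P x, z⟫_ℂ = 0 := by
    intro x z hz
    calc ⟪P x, z⟫_ℂ = ⟪adjoint P x, z⟫_ℂ := by rw [hPsa]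
      _ = ⟪x, P z⟫_ℂ := adjoint_inner_left P z x
      _ = 0 := by rw [hkerPB z hz, inner_zero_right]
  -- uniqueness of the decomposition data
  have huniq : ∀ x z x' z' : H, B z = 0 → B z' = 0 → P x + z = P x' + z' →
      B x + adjoint B z = B x' + adjoint B z' := by
    intro x z x' z' hz hz' h
    have hPw : P (x - x') = z' - z := by
      rw [map_sub, sub_eq_sub_iff_add_eq_add, h]
      abel
    have hz'' : B (P (x - x')) = 0 := by rw [hPw, map_sub, hz, hz', sub_zero]
    have h0 : P (P (x - x')) = 0 := hkerPB _ hz''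
    have hPP0 : P (x - x') = 0 := by
      have : ⟪P (x - x'), P (x - x')⟫_ℂ = 0 := by
        calc ⟪P (x - x'), P (x - x')⟫_ℂ
            = ⟪adjoint P (x - x'), P (x - x')⟫_ℂ := by rw [hPsa]
          _ = ⟪x - x', P (P (x - x'))⟫_ℂ := adjoint_inner_left P (P (x - x')) (x - x')
          _ = 0 := by rw [h0, inner_zero_right]
      exact inner_self_eq_zero.mp this
    have hzz : z = z' := by
      have h5 := hPw
      rw [hPP0] at h5
      exact (sub_eq_zero.mp h5.symm).symm
    have hBB : B x = B x' := by
      have h6 : ‖B (x - x')‖ = 0 := by rw [← hnPB, hPP0, norm_zero]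
      have h7 := norm_eq_zero.mp h6
      rw [map_sub] at h7
      exact sub_eq_zero.mp h7
    rw [hBB, hzz]
  -- the dense subspace
  set D : Submodule ℂ H := LinearMap.range (P : H →ₗ[ℂ] H) ⊔ LinearMap.ker (B : H →ₗ[ℂ] H) with hD
  have hdec : ∀ d : D, ∃ p : H × H, B p.2 = 0 ∧ P p.1 + p.2 = (d : H) := by
    intro d
    have hd : (d : H) ∈ LinearMap.range (P : H →ₗ[ℂ] H) ⊔ LinearMap.ker (B : H →ₗ[ℂ] H) := hD ▸ d.2
    obtain ⟨y, hy, z, hz, hyz⟩ := Submodule.mem_sup.mp hd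
    obtain ⟨x, rfl⟩ := LinearMap.mem_range.mp hy
    exact ⟨(x, z), LinearMap.mem_ker.mp hz, hyz⟩
  choose dec hdec1 hdec2 using hdec
  -- the isometry on D
  set fl : D →ₗ[ℂ] H :=
    { toFun := fun d => B (dec d).1 + adjoint B (dec d).2
      map_add' := by
        intro a b
        have key := huniq (dec (a + b)).1 (dec (a + b)).2 ((dec a).1 + (dec b).1)
          ((dec a).2 + (dec b).2) (hdec1 (a + b))
          (by rw [map_add, hdec1 a, hdec1 b, add_zero])
          (by rw [hdec2 (a + b), map_add, Submodule.coe_add, ← hdec2 a, ← hdec2 b]; abel)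
        simp only [key, map_add]
        abel
      map_smul' := by
        intro c a
        have key := huniq (dec (c • a)).1 (dec (c • a)).2 (c • (dec a).1) (c • (dec a).2)
          (hdec1 (c • a)) (by rw [map_smul, hdec1 a, smul_zero])
          (by rw [hdec2 (c • a), map_smul, Submodule.coe_smul, ← hdec2 a, smul_add])
        simp only [key, map_smul, RingHom.id_apply, smul_add]
    } with hfl
  have hfleq : ∀ (d : D) (x z : H), B z = 0 → P x + z = (d : H) →
      fl d = B x + adjoint B z := by
    intro d x z hz h
    exact huniq (dec d).1 (dec d).2 x z (hdec1 d) hz (by rw [hdec2 d, h])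
  have hflnorm : ∀ d : D, ‖fl d‖ = ‖d‖ := by
    intro d
    have hz := hdec1 d
    have h1 : ‖B (dec d).1 + adjoint B (dec d).2‖ * ‖B (dec d).1 + adjoint B (dec d).2‖
        = ‖P (dec d).1 + (dec d).2‖ * ‖P (dec d).1 + (dec d).2‖ := by
      rw [norm_add_sq_eq_norm_sq_add_norm_sq_of_inner_eq_zero _ _ (horth1 _ _ hz),
        norm_add_sq_eq_norm_sq_add_norm_sq_of_inner_eq_zero _ _ (horth2 _ _ hz),
        hnPB, hnadj _ hz]
    have h2 : ‖B (dec d).1 + adjoint B (dec d).2‖ = ‖P (dec d).1 + (dec d).2‖ := by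
      have h3 := congrArg Real.sqrt h1
      rwa [Real.sqrt_mul_self (norm_nonneg _), Real.sqrt_mul_self (norm_nonneg _)] at h3
    calc ‖fl d‖ = ‖B (dec d).1 + adjoint B (dec d).2‖ := rfl
      _ = ‖P (dec d).1 + (dec d).2‖ := h2
      _ = ‖(d : H)‖ := by rw [hdec2 d]
      _ = ‖d‖ := rfl
  set V0 : D →L[ℂ] H := fl.mkContinuous 1 (fun d => by rw [hflnorm d, one_mul]) with hV0
  -- density of D
  haveI : CompleteSpace (LinearMap.ker (B : H →ₗ[ℂ] H)) := (isClosed_ker B).completeSpace_coe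
  have hclosRange : (LinearMap.range (P : H →ₗ[ℂ] H))ᗮ = LinearMap.ker (B : H →ₗ[ℂ] H) := by
    ext u
    simp only [Submodule.mem_orthogonal, LinearMap.mem_range, LinearMap.mem_ker]
    constructor
    · intro h
      have h1 : ∀ x : H, ⟪P x, u⟫_ℂ = 0 := fun x => h (P x) ⟨x, rfl⟩
      have h2 : P u = 0 := by
        have h3 : ⟪P u, P u⟫_ℂ = 0 := by
          calc ⟪P u, P u⟫_ℂ = ⟪adjoint P (P u), u⟫_ℂ := (adjoint_inner_left P u (P u)).symm
            _ = ⟪P (P u), u⟫_ℂ := by rw [hPsa]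
            _ = 0 := h1 (P u)
        exact inner_self_eq_zero.mp h3
      have h4 := hnPB u
      rw [h2, norm_zero] at h4
      exact norm_eq_zero.mp h4.symm
    · rintro hu v ⟨x, rfl⟩
      exact horth2 x u hu
  have hclosure : (LinearMap.range (P : H →ₗ[ℂ] H)).topologicalClosure = (LinearMap.ker (B : H →ₗ[ℂ] H))ᗮ := by
    rw [← hclosRange, ← Submodule.orthogonal_orthogonal_eq_closure]
  have htop : D.topologicalClosure = ⊤ := by
    rw [eq_top_iff, ← Submodule.sup_orthogonal_of_hasOrthogonalProjection (K := LinearMap.ker (B : H →ₗ[ℂ] H))]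
    apply sup_le
    · exact le_trans le_sup_right (Submodule.le_topologicalClosure _)
    · rw [← hclosure]
      exact Submodule.topologicalClosure_mono le_sup_left
  have hDdense : Dense (D : Set H) := by
    have h1 : (D.topologicalClosure : Set H) = ((⊤ : Submodule ℂ H) : Set H) := by
      rw [htop]
    rw [Submodule.topologicalClosure_coe] at h1
    rw [dense_iff_closure_eq, h1, Submodule.top_coe]
  -- the unitary
  set U : H →L[ℂ] H := V0.extend (Submodule.subtypeL D) with hU
  have hUD : ∀ d : D, U (d : H) = fl d := by
    intro d
    have h := ContinuousLinearMap.extend_eq V0 (e := Submodule.subtypeL D) hDdense.denseRange_val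
      isUniformEmbedding_subtype_val.isUniformInducing d
    simpa [hU, Submodule.subtypeL_apply, hV0, LinearMap.mkContinuous_apply] using h
  have hUP : ∀ x : H, U (P x) = B x := by
    intro x
    have hm : P x ∈ D := Submodule.mem_sup_left (LinearMap.mem_range_self (P : H →ₗ[ℂ] H) x)
    have h1 := hUD ⟨P x, hm⟩
    have h2 := hfleq ⟨P x, hm⟩ x 0 (map_zero B) (by simp)
    rw [show ((⟨P x, hm⟩ : D) : H) = P x from rfl] at h1
    rw [h1, h2, map_zero, add_zero]
  have hUK : ∀ z : H, B z = 0 → U z = adjoint B z := by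
    intro z hz
    have hm : z ∈ D := Submodule.mem_sup_right (LinearMap.mem_ker.mpr hz)
    have h1 := hUD ⟨z, hm⟩
    have h2 := hfleq ⟨z, hm⟩ 0 z hz (by simp)
    rw [show ((⟨z, hm⟩ : D) : H) = z from rfl] at h1
    rw [h1, h2, map_zero, zero_add]
  have hUiso : ∀ y : H, ‖U y‖ = ‖y‖ := by
    have hcl : IsClosed {y : H | ‖U y‖ = ‖y‖} :=
      isClosed_eq (U.continuous.norm) continuous_norm
    intro y
    refine hDdense.denseRange_val.induction_on y hcl ?_
    intro d
    show ‖U (d : H)‖ = ‖(d : H)‖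
    rw [hUD d]
    exact hflnorm d
  have hU1 : adjoint U ∘L U = 1 := (norm_map_iff_adjoint_comp_self U).mp hUiso
  -- surjectivity
  have hUisom : Isometry U := AddMonoidHomClass.isometry_of_norm U hUiso
  have hclosedRange : IsClosed (Set.range U) := hUisom.isClosedEmbedding.isClosed_range
  haveI : CompleteSpace (LinearMap.ker ((adjoint B : H →L[ℂ] H) : H →ₗ[ℂ] H)) :=
    (isClosed_ker (adjoint B)).completeSpace_coe
  have hadjker : (LinearMap.range (B : H →ₗ[ℂ] H))ᗮ = LinearMap.ker ((adjoint B : H →L[ℂ] H) : H →ₗ[ℂ] H) := by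
    ext u
    simp only [Submodule.mem_orthogonal, LinearMap.mem_range, LinearMap.mem_ker]
    constructor
    · intro h
      have h1 : ∀ x : H, ⟪B x, u⟫_ℂ = 0 := fun x => h (B x) ⟨x, rfl⟩
      have h2 : ⟪adjoint B u, adjoint B u⟫_ℂ = 0 := by
        rw [adjoint_inner_left B (adjoint B u) u, ← inner_conj_symm,
          h1 (adjoint B u), map_zero]
      exact inner_self_eq_zero.mp h2
    · rintro hu v ⟨x, rfl⟩
      change ⟪B x, u⟫_ℂ = 0
      rw [← adjoint_inner_right B x u, show adjoint B u = 0 from hu, inner_zero_right]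
  have hrange_top : LinearMap.range (U : H →ₗ[ℂ] H) = ⊤ := by
    rw [eq_top_iff, ← Submodule.sup_orthogonal_of_hasOrthogonalProjection
      (K := LinearMap.ker ((adjoint B : H →L[ℂ] H) : H →ₗ[ℂ] H))]
    apply sup_le
    · intro y hy
      rw [LinearMap.mem_ker] at hy
      change adjoint B y = 0 at hy
      have h1 : adjoint B (B y) = y := by
        have h := hBpt y
        rwa [hy, map_zero, zero_add] at h
      have h3 : adjoint B (B (B y)) = 0 := by
        have h4 := hBpt (B y)
        rw [h1] at h4
        exact add_eq_left.mp h4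
      have h2 : B (B y) = 0 := by
        have h6 : ⟪B (B y), B (B y)⟫_ℂ = 0 := by
          rw [← adjoint_inner_right B (B y) (B (B y)), h3, inner_zero_right]
        exact inner_self_eq_zero.mp h6
      exact ⟨B y, by change U (B y) = y; rw [hUK (B y) h2, h1]⟩
    · rw [← hadjker, Submodule.orthogonal_orthogonal_eq_closure]
      apply Submodule.topologicalClosure_minimal
      · rintro v ⟨x, rfl⟩
        exact ⟨P x, hUP x⟩
      · exact hclosedRange
  have hsurj : Function.Surjective U := LinearMap.range_eq_top.mp hrange_top
  have hUU : U ∘L adjoint U = 1 := by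
    ext y
    obtain ⟨x, rfl⟩ := hsurj y
    have hx : adjoint U (U x) = x := by
      have h := DFunLike.congr_fun hU1 x
      simpa using h
    simp [comp_apply, one_apply, hx]
  exact ⟨U, P, hU1, hUU, hPpos, hPP, ContinuousLinearMap.ext fun x => (hUP x).symm⟩
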